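/- arXiv:2309.04897 — 7 statements merged into one kernel-verified Lean document; each statement's English description precedes it below -/
import Mathlib

section
/- (Reflection equation for the unfused R- and K-matrices.) For all q, 𝔞, 𝔠 ∈ ℂ and x, y ∈ ℂ \ {0} with q·xy ≠ 1, q·(x/y) ≠ 1, 𝔠x² + x − 𝔞 ≠ 0 and 𝔠y² + y − 𝔞 ≠ 0, the following identity of operators on ℂ² ⊗ ℂ² holds: K(y)₂ ∘ R(xy)_{1,2} ∘ K(x)₁ ∘ R(x/y)_{2,1} = R(x/y)_{1,2} ∘ K(x)₁ ∘ R(xy)_{2,1} ∘ K(y)₂, where K(v)₁ := K(v) ⊗ Id, K(v)₂ := Id ⊗ K(v), R(v)_{1,2} := R(v), and R(v)_{2,1} := P ∘ R(v) ∘ P with P the operator swapping the two tensor factors. -/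
open scoped Matrix ComplexOrder

noncomputable section

/-- Entries `R(u)_{a,b}^{c,d}` of the unfused stochastic six-vertex `R`-matrix. -/
def Rent (q u : ℂ) (a b c d : Fin 2) : ℂ :=
  if a = 0 ∧ b = 0 ∧ c = 0 ∧ d = 0 then 1
  else if a = 1 ∧ b = 1 ∧ c = 1 ∧ d = 1 then 1
  else if a = 0 ∧ b = 1 ∧ c = 0 ∧ d = 1 then q * (1 - u) / (1 - q * u)
  else if a = 0 ∧ b = 1 ∧ c = 1 ∧ d = 0 then (1 - q) / (1 - q * u)
  else if a = 1 ∧ b = 0 ∧ c = 0 ∧ d = 1 then u * (1 - q) / (1 - q * u)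
  else if a = 1 ∧ b = 0 ∧ c = 1 ∧ d = 0 then (1 - u) / (1 - q * u)
  else 0

/-- The unfused `R`-matrix as an operator (matrix) on `ℂ² ⊗ ℂ²`;
row index `(c,d)` (output), column index `(a,b)` (input), so that
`R(u)(e_a ⊗ e_b) = Σ_{c,d} R(u)_{a,b}^{c,d} e_c ⊗ e_d`. -/
def Rmat (q u : ℂ) : Matrix (Fin 2 × Fin 2) (Fin 2 × Fin 2) ℂ :=
  fun cd ab => Rent q u ab.1 ab.2 cd.1 cd.2

/-- Entries `K(u)_a^d` of the unfused boundary `K`-matrix, parameters `fa = 𝔞`, `fc = 𝔠`. -/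
def Kent (fa fc u : ℂ) (a d : Fin 2) : ℂ :=
  if a = 0 ∧ d = 0 then ((fc - fa) * u ^ 2 + u) / (fc * u ^ 2 + u - fa)
  else if a = 0 ∧ d = 1 then fa * (u ^ 2 - 1) / (fc * u ^ 2 + u - fa)
  else if a = 1 ∧ d = 0 then fc * (u ^ 2 - 1) / (fc * u ^ 2 + u - fa)
  else (fc - fa + u) / (fc * u ^ 2 + u - fa)

/-- The unfused `K`-matrix as an operator on `ℂ²`: row `d` (output), column `a` (input). -/
def Kmat (fa fc u : ℂ) : Matrix (Fin 2) (Fin 2) ℂ := fun d a => Kent fa fc u a d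

/-- Entries `K̄(u)_b^c` of the unfused boundary `K̄`-matrix, parameters `fb = 𝔟`, `fd = 𝔡`. -/
def Kbent (fb fd u : ℂ) (b c : Fin 2) : ℂ :=
  if b = 0 ∧ c = 0 then ((fb - fd) * u ^ 2 - u) / (fb * u ^ 2 - u - fd)
  else if b = 0 ∧ c = 1 then fd * (u ^ 2 - 1) / (fb * u ^ 2 - u - fd)
  else if b = 1 ∧ c = 0 then fb * (u ^ 2 - 1) / (fb * u ^ 2 - u - fd)
  else (fb - fd - u) / (fb * u ^ 2 - u - fd)

/-- The operator `P` on `ℂ² ⊗ ℂ²` swapping the two tensor factors. -/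
def swapMat : Matrix (Fin 2 × Fin 2) (Fin 2 × Fin 2) ℂ :=
  fun p r => if p.1 = r.2 ∧ p.2 = r.1 then 1 else 0

/-- `Ř(u) = P ∘ R(u)`. -/
def RcheckMat (q u : ℂ) : Matrix (Fin 2 × Fin 2) (Fin 2 × Fin 2) ℂ := swapMat * Rmat q u

/-- A two-site operator `T` placed at sites `i, j` of an `n`-fold tensor power of `ℂ²`,
acting as the identity on the other factors.  Here `(ℂ²)^{⊗n}` is identified with the
function space `(Fin n → Fin 2) → ℂ` with its standard basis. -/
def emb2 {n : ℕ} (i j : Fin n) (T : Matrix (Fin 2 × Fin 2) (Fin 2 × Fin 2) ℂ) :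
    Matrix (Fin n → Fin 2) (Fin n → Fin 2) ℂ :=
  fun x y => T (x i, x j) (y i, y j) * (if ∀ k, k ≠ i → k ≠ j → x k = y k then 1 else 0)

/-- A one-site operator `T` placed at site `i` of an `n`-fold tensor power of `ℂ²`. -/
def emb1 {n : ℕ} (i : Fin n) (T : Matrix (Fin 2) (Fin 2) ℂ) :
    Matrix (Fin n → Fin 2) (Fin n → Fin 2) ℂ :=
  fun x y => T (x i) (y i) * (if ∀ k, k ≠ i → x k = y k then 1 else 0)

/-- The permutation operator `P_ω` on `(ℂ²)^{⊗n}`: it puts the `k`-th factor in position `ω(k)`. -/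
def permMat (n : ℕ) (ω : Equiv.Perm (Fin n)) :
    Matrix (Fin n → Fin 2) (Fin n → Fin 2) ℂ :=
  fun x y => if (fun k => x (ω k)) = y then 1 else 0

/-- `inv(a)` : the number of inversions of a `{0,1}`-word. -/
def invCount {I : ℕ} (x : Fin I → Fin 2) : ℕ :=
  (Finset.univ.filter (fun p : Fin I × Fin I => p.1 < p.2 ∧ x p.2 < x p.1)).card

/-- `Z_q(I;m)`. -/
def Zq (I : ℕ) (q : ℂ) (m : ℕ) : ℂ :=
  ∑ x ∈ Finset.univ.filter (fun x : Fin I → Fin 2 => (∑ j, ((x j : ℕ))) = m),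
    q ^ invCount x

/-- The projection `Π : (ℂ²)^{⊗I} → ℂ^{I+1}`, `e_{a₁…a_I} ↦ e_{Σ a_j}`. -/
def PiMat (I : ℕ) : Matrix (Fin (I + 1)) (Fin I → Fin 2) ℂ :=
  fun m x => if (∑ j, ((x j : ℕ))) = (m : ℕ) then 1 else 0

/-- The injection `Π̂ : ℂ^{I+1} → (ℂ²)^{⊗I}`. -/
def hatPiMat (I : ℕ) (q : ℂ) : Matrix (Fin I → Fin 2) (Fin (I + 1)) ℂ :=
  fun x m => if (∑ j, ((x j : ℕ))) = (m : ℕ) then q ^ invCount x / Zq I q (m : ℕ) else 0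

/-- `F = Π̂ ∘ Π`, the projector onto the `q`-exchangeable subspace. -/
def Fmat (I : ℕ) (q : ℂ) : Matrix (Fin I → Fin 2) (Fin I → Fin 2) ℂ :=
  hatPiMat I q * PiMat I

/-- Restriction of a configuration on `2I` sites to the first `I` sites. -/
def firstHalf {I : ℕ} (x : Fin (2 * I) → Fin 2) : Fin I → Fin 2 :=
  fun k => x ⟨k.1, by have := k.isLt; omega⟩

/-- Restriction of a configuration on `2I` sites to the last `I` sites. -/
def secondHalf {I : ℕ} (x : Fin (2 * I) → Fin 2) : Fin I → Fin 2 :=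
  fun k => x ⟨k.1 + I, by have := k.isLt; omega⟩

/-- `F ⊗ F` acting on `(ℂ²)^{⊗2I}`. -/
def FFmat (I : ℕ) (q : ℂ) : Matrix (Fin (2 * I) → Fin 2) (Fin (2 * I) → Fin 2) ℂ :=
  fun x y => Fmat I q (firstHalf x) (firstHalf y) * Fmat I q (secondHalf x) (secondHalf y)

/-- `Π ⊗ Π : (ℂ²)^{⊗2I} → ℂ^{I+1} ⊗ ℂ^{I+1}`. -/
def PiPiMat (I : ℕ) : Matrix (Fin (I + 1) × Fin (I + 1)) (Fin (2 * I) → Fin 2) ℂ :=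
  fun p x => PiMat I p.1 (firstHalf x) * PiMat I p.2 (secondHalf x)

/-- `Π̂ ⊗ Π̂ : ℂ^{I+1} ⊗ ℂ^{I+1} → (ℂ²)^{⊗2I}`. -/
def hatPiPiMat (I : ℕ) (q : ℂ) : Matrix (Fin (2 * I) → Fin 2) (Fin (I + 1) × Fin (I + 1)) ℂ :=
  fun x p => hatPiMat I q (firstHalf x) p.1 * hatPiMat I q (secondHalf x) p.2

/-- The fused bulk operator `R̊^I(u)` on `(ℂ²)^{⊗2I}` : the ordered product (composition,
factors written from left to right) over `a = I, I-1, …, 1` and, inside, `b = 1, 2, …, I`,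
of the operators `R(u q^{b-a})_{b, a+I}` (sites are 1-based; here `a = I - a'`, `b = b' + 1`). -/
def Rring (I : ℕ) (q u : ℂ) : Matrix (Fin (2 * I) → Fin 2) (Fin (2 * I) → Fin 2) ℂ :=
  ((List.finRange I).map (fun a' =>
    ((List.finRange I).map (fun b' =>
      emb2 (⟨b'.1, by have := b'.isLt; omega⟩ : Fin (2 * I))
        ⟨2 * I - 1 - a'.1, by have := a'.isLt; omega⟩
        (Rmat q (u * q ^ (((b'.1 : ℤ) + 1) - ((I : ℤ) - (a'.1 : ℤ))))))).prod)).prod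

/-- The fused `R`-matrix `R^I(u) = (Π⊗Π) ∘ R̊^I(u) ∘ (Π̂⊗Π̂)` on `ℂ^{I+1} ⊗ ℂ^{I+1}`;
its entry at row `(c,d)`, column `(a,b)` is `R^I(u)_{a,b}^{c,d}`. -/
def RI (I : ℕ) (q u : ℂ) :
    Matrix (Fin (I + 1) × Fin (I + 1)) (Fin (I + 1) × Fin (I + 1)) ℂ :=
  PiPiMat I * Rring I q u * hatPiPiMat I q

/-- Real powers of a positive real number, viewed in `ℂ`. -/
def qrpow (q : ℝ) (r : ℝ) : ℂ := ((q ^ r : ℝ) : ℂ)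

/-- The fused boundary operator `K̊^I(u)` on `(ℂ²)^{⊗I}` : `P_rev` composed with the ordered
product over `a = I, …, 1` of `K(u q^{(I+1)/2-a})_a` composed with the ordered product over
`b = a-1, …, 1` of `R(u² q^{I+1-a-b})_{b,a}` (sites 1-based; `a = I - a'`, `b = a - 1 - b'`). -/
def Kring (I : ℕ) (q : ℝ) (fa fc : ℂ) (u : ℂ) :
    Matrix (Fin I → Fin 2) (Fin I → Fin 2) ℂ :=
  permMat I (Fin.revPerm) *
  ((List.finRange I).map (fun a' =>
    emb1 (⟨I - 1 - a'.1, by have := a'.isLt; omega⟩ : Fin I)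
        (Kmat fa fc (u * qrpow q (((I : ℝ) + 1) / 2 - ((I : ℝ) - (a'.1 : ℝ))))) *
    ((List.finRange (I - 1 - a'.1)).map (fun b' =>
      emb2 (⟨I - a'.1 - 2 - b'.1, by have := a'.isLt; have := b'.isLt; omega⟩ : Fin I)
        ⟨I - 1 - a'.1, by have := a'.isLt; omega⟩
        (Rmat (q : ℂ)
          (u ^ 2 * (q : ℂ) ^ (((I : ℤ) + 1) - ((I : ℤ) - (a'.1 : ℤ)) -
            ((I : ℤ) - (a'.1 : ℤ) - 1 - (b'.1 : ℤ))))))).prod)).prod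

/-- The fused `K`-matrix `K^I(u) = Π ∘ K̊^I(u) ∘ Π̂` on `ℂ^{I+1}`;
its entry at row `d`, column `a` is `K^I(u)_a^d`. -/
def KI (I : ℕ) (q : ℝ) (fa fc u : ℂ) : Matrix (Fin (I + 1)) (Fin (I + 1)) ℂ :=
  PiMat I * Kring I q fa fc u * hatPiMat I (q : ℂ)

/-- `M₀(u) = u·1 + 𝐞`, `M₁(u) = u⁻¹·1 + 𝐝` in a ℂ-algebra `A`. -/
def Mop {A : Type*} [Ring A] [Algebra ℂ A] (dd ee : A) (i : Fin 2) (u : ℂ) : A :=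
  if i = 0 then algebraMap ℂ A u + ee else algebraMap ℂ A u⁻¹ + dd

/-- The fused elements `M^I_ζ(u)`. -/
def MIop {A : Type*} [Ring A] [Algebra ℂ A] (dd ee : A) (I : ℕ) (q : ℝ) (ζ : ℕ) (u : ℂ) : A :=
  ∑ z ∈ Finset.univ.filter (fun z : Fin I → Fin 2 => (∑ j, ((z j : ℕ))) = ζ),
    ((List.finRange I).map (fun a =>
      Mop dd ee (z a) (u * qrpow q (((a.1 : ℝ) + 1) - ((I : ℝ) + 1) / 2)))).prod

end

/-- `K ⊗ Id` on `ℂ² ⊗ ℂ²`. -/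
noncomputable def oneSite1 (K : Matrix (Fin 2) (Fin 2) ℂ) :
    Matrix (Fin 2 × Fin 2) (Fin 2 × Fin 2) ℂ :=
  fun p r => K p.1 r.1 * (if p.2 = r.2 then 1 else 0)

/-- `Id ⊗ K` on `ℂ² ⊗ ℂ²`. -/
noncomputable def oneSite2 (K : Matrix (Fin 2) (Fin 2) ℂ) :
    Matrix (Fin 2 × Fin 2) (Fin 2 × Fin 2) ℂ :=
  fun p r => K p.2 r.2 * (if p.1 = r.1 then 1 else 0)


/-- Polynomial form of the `R`-matrix with spectral parameter `a/b`. -/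
noncomputable def Rpoly (q a b : ℂ) : Matrix (Fin 2 × Fin 2) (Fin 2 × Fin 2) ℂ :=
  fun cd ab =>
    if ab.1 = 0 ∧ ab.2 = 0 ∧ cd.1 = 0 ∧ cd.2 = 0 then b - q * a
    else if ab.1 = 1 ∧ ab.2 = 1 ∧ cd.1 = 1 ∧ cd.2 = 1 then b - q * a
    else if ab.1 = 0 ∧ ab.2 = 1 ∧ cd.1 = 0 ∧ cd.2 = 1 then q * (b - a)
    else if ab.1 = 0 ∧ ab.2 = 1 ∧ cd.1 = 1 ∧ cd.2 = 0 then (1 - q) * b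
    else if ab.1 = 1 ∧ ab.2 = 0 ∧ cd.1 = 0 ∧ cd.2 = 1 then a * (1 - q)
    else if ab.1 = 1 ∧ ab.2 = 0 ∧ cd.1 = 1 ∧ cd.2 = 0 then b - a
    else 0

/-- Polynomial (numerator) form of the `K`-matrix. -/
noncomputable def Kpoly (fa fc u : ℂ) : Matrix (Fin 2) (Fin 2) ℂ :=
  fun d a =>
    if a = 0 ∧ d = 0 then (fc - fa) * u ^ 2 + u
    else if a = 0 ∧ d = 1 then fa * (u ^ 2 - 1)
    else if a = 1 ∧ d = 0 then fc * (u ^ 2 - 1)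
    else fc - fa + u

lemma oneSite1_smul (s : ℂ) (K : Matrix (Fin 2) (Fin 2) ℂ) :
    oneSite1 (s • K) = s • oneSite1 K := by
  ext p r
  simp [oneSite1, Matrix.smul_apply, mul_assoc]

lemma oneSite2_smul (s : ℂ) (K : Matrix (Fin 2) (Fin 2) ℂ) :
    oneSite2 (s • K) = s • oneSite2 K := by
  ext p r
  simp [oneSite2, Matrix.smul_apply, mul_assoc]

/-- Index-flipped matrix. -/
noncomputable def flipConj (M : Matrix (Fin 2 × Fin 2) (Fin 2 × Fin 2) ℂ) :
    Matrix (Fin 2 × Fin 2) (Fin 2 × Fin 2) ℂ :=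
  fun p r => M (p.2, p.1) (r.2, r.1)

lemma swap_conj (M : Matrix (Fin 2 × Fin 2) (Fin 2 × Fin 2) ℂ) :
    swapMat * M * swapMat = flipConj M := by
  ext ⟨c, d⟩ ⟨a, b⟩
  fin_cases a <;> fin_cases b <;> fin_cases c <;> fin_cases d <;>
    simp [Matrix.mul_apply, swapMat, flipConj, Fintype.sum_prod_type, Fin.sum_univ_two]

lemma Kmat_eq (fa fc u : ℂ) :
    Kmat fa fc u = (fc * u ^ 2 + u - fa)⁻¹ • Kpoly fa fc u := by
  ext d a
  fin_cases d <;> fin_cases a <;>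
    simp [Kmat, Kent, Kpoly, Matrix.smul_apply, div_eq_inv_mul]

set_option maxHeartbeats 2000000 in
lemma key_poly (q fa fc x y : ℂ) :
    oneSite2 (Kpoly fa fc y) * Rpoly q (x * y) 1 * oneSite1 (Kpoly fa fc x) *
        flipConj (Rpoly q x y) =
      Rpoly q x y * oneSite1 (Kpoly fa fc x) *
        flipConj (Rpoly q (x * y) 1) * oneSite2 (Kpoly fa fc y) := by
  ext ⟨c, d⟩ ⟨a, b⟩
  fin_cases a <;> fin_cases b <;> fin_cases c <;> fin_cases d <;>
    simp [Matrix.mul_apply, Fintype.sum_prod_type, Fin.sum_univ_two, oneSite1, oneSite2,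
      flipConj, Rpoly, Kpoly] <;>
    ring

set_option maxHeartbeats 4000000 in
/-- **Reflection equation** for the unfused `R`- and `K`-matrices:
`K(y)₂ ∘ R(xy)_{1,2} ∘ K(x)₁ ∘ R(x/y)_{2,1} = R(x/y)_{1,2} ∘ K(x)₁ ∘ R(xy)_{2,1} ∘ K(y)₂`,
where `R(v)_{2,1} = P ∘ R(v) ∘ P`. -/
theorem reflection_equation (q fa fc x y : ℂ) (hx : x ≠ 0) (hy : y ≠ 0)
    (h1 : q * (x * y) ≠ 1) (h2 : q * (x / y) ≠ 1)
    (h3 : fc * x ^ 2 + x - fa ≠ 0) (h4 : fc * y ^ 2 + y - fa ≠ 0) :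
    oneSite2 (Kmat fa fc y) * Rmat q (x * y) * oneSite1 (Kmat fa fc x) *
        (swapMat * Rmat q (x / y) * swapMat) =
      Rmat q (x / y) * oneSite1 (Kmat fa fc x) *
        (swapMat * Rmat q (x * y) * swapMat) * oneSite2 (Kmat fa fc y) := by
  have hxy : (1 : ℂ) - q * (x * y) ≠ 0 := sub_ne_zero.2 fun h => h1 h.symm
  have hxy2 : (1 : ℂ) - q * (x / y) ≠ 0 := sub_ne_zero.2 fun h => h2 h.symm
  have hyqx : y - q * x ≠ 0 := by
    have : y - q * x = y * (1 - q * (x / y)) := by field_simp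
    rw [this]
    exact mul_ne_zero hy hxy2
  have e1 : Rmat q (x * y) = (1 - q * (x * y))⁻¹ • Rpoly q (x * y) 1 := by
    have hxy' : (1 : ℂ) - q * x * y ≠ 0 := by rwa [mul_assoc]
    ext ⟨c, d⟩ ⟨a, b⟩
    fin_cases a <;> fin_cases b <;> fin_cases c <;> fin_cases d <;>
      simp [Rmat, Rent, Rpoly, Matrix.smul_apply] <;> field_simp
  have e2 : Rmat q (x / y) = (y - q * x)⁻¹ • Rpoly q x y := by
    ext ⟨c, d⟩ ⟨a, b⟩
    fin_cases a <;> fin_cases b <;> fin_cases c <;> fin_cases d <;>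
      simp [Rmat, Rent, Rpoly, Matrix.smul_apply] <;> field_simp <;> ring
  rw [e1, e2, Kmat_eq fa fc x, Kmat_eq fa fc y, oneSite1_smul, oneSite2_smul]
  simp only [Matrix.mul_smul, Matrix.smul_mul, smul_smul]
  rw [swap_conj, swap_conj, key_poly]
  congr 1
  ring
end

section
/- (Stochasticity and positivity of the unfused K-matrix.) Suppose 𝔞, 𝔠 ∈ ℝ with 𝔞 > 0, 𝔠 > 0, and u ∈ ℝ with 0 < u < 1 and 𝔞 − 𝔠 > 1/u. Then 𝔠u² + u − 𝔞 ≠ 0, all four entries K(u)_0^0, K(u)_0^1, K(u)_1^0, K(u)_1^1 are strictly positive, and Σ_{d ∈ {0,1}} K(u)_a^d = 1 for each a ∈ {0,1}. -/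
open scoped Matrix ComplexOrder

/-- **Stochasticity and positivity of the unfused `K`-matrix**: for real `𝔞, 𝔠 > 0`,
`0 < u < 1` and `𝔞 − 𝔠 > 1/u`, the denominator is nonzero, all four entries are strictly
positive (in the `ComplexOrder`), and the rows sum to one. -/
theorem K_stochastic_positive (fa fc u : ℝ) (hfa : 0 < fa) (hfc : 0 < fc)
    (hu0 : 0 < u) (hu1 : u < 1) (hgap : fa - fc > 1 / u) :
    fc * u ^ 2 + u - fa ≠ 0 ∧
    (0 < Kent (fa : ℂ) (fc : ℂ) (u : ℂ) 0 0 ∧ 0 < Kent (fa : ℂ) (fc : ℂ) (u : ℂ) 0 1 ∧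
      0 < Kent (fa : ℂ) (fc : ℂ) (u : ℂ) 1 0 ∧ 0 < Kent (fa : ℂ) (fc : ℂ) (u : ℂ) 1 1) ∧
    (∀ a : Fin 2, ∑ d : Fin 2, Kent (fa : ℂ) (fc : ℂ) (u : ℂ) a d = 1) := by
  have hu2 : u ^ 2 < 1 := by nlinarith
  have hgap' : 1 < (fa - fc) * u := by
    rw [gt_iff_lt, div_lt_iff₀ hu0] at hgap; linarith
  have h1u : 1 < 1 / u := one_lt_one_div hu0 hu1
  have h1 : fc * u ^ 2 < fc := by nlinarith [mul_lt_mul_of_pos_left hu2 hfc]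
  have hD : fc * u ^ 2 + u - fa < 0 := by
    have : 1 / u < fa - fc := hgap
    have hu1' : u < 1 / u := by linarith
    linarith
  have hDne : fc * u ^ 2 + u - fa ≠ 0 := ne_of_lt hD
  have h00 : (fc - fa) * u ^ 2 + u < 0 := by
    nlinarith [mul_lt_mul_of_pos_left hgap' hu0]
  have h01 : fa * (u ^ 2 - 1) < 0 := mul_neg_of_pos_of_neg hfa (by linarith)
  have h10 : fc * (u ^ 2 - 1) < 0 := mul_neg_of_pos_of_neg hfc (by linarith)
  have h11 : fc - fa + u < 0 := by
    have : 1 / u < fa - fc := hgap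
    linarith
  refine ⟨hDne, ⟨?_, ?_, ?_, ?_⟩, ?_⟩
  · show (0:ℂ) < (((fc:ℂ) - fa) * u ^ 2 + u) / ((fc:ℂ) * u ^ 2 + u - fa)
    have : ((((fc - fa) * u ^ 2 + u) / (fc * u ^ 2 + u - fa) : ℝ) : ℂ)
        = (((fc:ℂ) - fa) * u ^ 2 + u) / ((fc:ℂ) * u ^ 2 + u - fa) := by push_cast; ring
    rw [← this, Complex.zero_lt_real]
    exact div_pos_of_neg_of_neg h00 hD
  · show (0:ℂ) < (fa:ℂ) * ((u:ℂ) ^ 2 - 1) / ((fc:ℂ) * u ^ 2 + u - fa)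
    have : (((fa * (u ^ 2 - 1)) / (fc * u ^ 2 + u - fa) : ℝ) : ℂ)
        = (fa:ℂ) * ((u:ℂ) ^ 2 - 1) / ((fc:ℂ) * u ^ 2 + u - fa) := by push_cast; ring
    rw [← this, Complex.zero_lt_real]
    exact div_pos_of_neg_of_neg h01 hD
  · show (0:ℂ) < (fc:ℂ) * ((u:ℂ) ^ 2 - 1) / ((fc:ℂ) * u ^ 2 + u - fa)
    have : (((fc * (u ^ 2 - 1)) / (fc * u ^ 2 + u - fa) : ℝ) : ℂ)
        = (fc:ℂ) * ((u:ℂ) ^ 2 - 1) / ((fc:ℂ) * u ^ 2 + u - fa) := by push_cast; ring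
    rw [← this, Complex.zero_lt_real]
    exact div_pos_of_neg_of_neg h10 hD
  · show (0:ℂ) < ((fc:ℂ) - fa + u) / ((fc:ℂ) * u ^ 2 + u - fa)
    have : (((fc - fa + u) / (fc * u ^ 2 + u - fa) : ℝ) : ℂ)
        = ((fc:ℂ) - fa + u) / ((fc:ℂ) * u ^ 2 + u - fa) := by push_cast; ring
    rw [← this, Complex.zero_lt_real]
    exact div_pos_of_neg_of_neg h11 hD
  · have hDc : ((fc:ℂ) * u ^ 2 + u - fa) ≠ 0 := by
      have h := Complex.ofReal_ne_zero.mpr hDne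
      push_cast at h
      exact h
    intro a
    fin_cases a <;>
      simp only [Kent, Fin.sum_univ_two] <;> simp <;>
      rw [← add_div, div_eq_one_iff_eq hDc] <;> ring
end

section
/- (Stochasticity and positivity of the unfused K̄-matrix.) Suppose 𝔟, 𝔡 ∈ ℝ with 𝔟 > 0, 𝔡 > 0, and u ∈ ℝ with u > 1 and 𝔟 − 𝔡 > u. Then 𝔟u² − u − 𝔡 ≠ 0, all four entries K̄(u)_0^0, K̄(u)_0^1, K̄(u)_1^0, K̄(u)_1^1 are strictly positive, and Σ_{c ∈ {0,1}} K̄(u)_b^c = 1 for each b ∈ {0,1}. -/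
open scoped Matrix ComplexOrder

/-- **Stochasticity and positivity of the unfused `K̄`-matrix**: for real `𝔟, 𝔡 > 0`,
`u > 1` and `𝔟 − 𝔡 > u`, the denominator is nonzero, all four entries are strictly
positive (in the `ComplexOrder`), and the rows sum to one. -/
theorem Kbar_stochastic_positive (fb fd u : ℝ) (hfb : 0 < fb) (hfd : 0 < fd)
    (hu : 1 < u) (hgap : fb - fd > u) :
    fb * u ^ 2 - u - fd ≠ 0 ∧
    (0 < Kbent (fb : ℂ) (fd : ℂ) (u : ℂ) 0 0 ∧ 0 < Kbent (fb : ℂ) (fd : ℂ) (u : ℂ) 0 1 ∧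
      0 < Kbent (fb : ℂ) (fd : ℂ) (u : ℂ) 1 0 ∧ 0 < Kbent (fb : ℂ) (fd : ℂ) (u : ℂ) 1 1) ∧
    (∀ b : Fin 2, ∑ c : Fin 2, Kbent (fb : ℂ) (fd : ℂ) (u : ℂ) b c = 1) := by
  have hu0 : (0:ℝ) < u := by linarith
  have h1 : (0:ℝ) < u ^ 2 - 1 := by nlinarith
  have hD : 0 < fb * u ^ 2 - u - fd := by
    nlinarith [mul_lt_mul_of_pos_right (show fd + u < fb by linarith) (show (0:ℝ) < u ^ 2 by positivity)]
  have hDC : ((fb : ℂ) * u ^ 2 - u - fd) ≠ 0 := by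
    have h : ((fb * u ^ 2 - u - fd : ℝ) : ℂ) ≠ 0 := by exact_mod_cast hD.ne'
    push_cast at h; exact h
  have key : ∀ a : ℝ, 0 < a / (fb * u ^ 2 - u - fd) →
      (0 : ℂ) < ((a : ℝ) : ℂ) / ((fb : ℂ) * u ^ 2 - u - fd) := by
    intro a ha
    have : (0 : ℂ) < ((a / (fb * u ^ 2 - u - fd) : ℝ) : ℂ) := by
      rw [Complex.zero_lt_real]; exact ha
    push_cast at this; exact this
  refine ⟨hD.ne', ⟨?_, ?_, ?_, ?_⟩, ?_⟩
  · have h2 := key ((fb - fd) * u ^ 2 - u)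
      (div_pos (by nlinarith [mul_lt_mul_of_pos_right hgap (show (0:ℝ) < u ^ 2 by positivity)]) hD)
    push_cast at h2
    simpa [Kbent] using h2
  · have h2 := key (fd * (u ^ 2 - 1)) (div_pos (mul_pos hfd h1) hD)
    push_cast at h2
    simpa [Kbent] using h2
  · have h2 := key (fb * (u ^ 2 - 1)) (div_pos (mul_pos hfb h1) hD)
    push_cast at h2
    simpa [Kbent] using h2
  · have h2 := key (fb - fd - u) (div_pos (by linarith) hD)
    push_cast at h2
    simpa [Kbent] using h2
  · intro b
    fin_cases b <;>
    · simp only [Fin.sum_univ_two, Kbent]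
      norm_num
      rw [← add_div, div_eq_one_iff_eq hDC]
      ring
end

section
/- (Unfused Zamolodchikov–Faddeev relation.) Let q ∈ ℂ. For all x, y ∈ ℂ \ {0} with q·(x/y) ≠ 1 and all c, d ∈ {0,1}, the following identity holds in A: M_c(y) · M_d(x) = Σ_{a,b ∈ {0,1}} R(x/y)_{b,a}^{d,c} · M_b(x) · M_a(y). -/
open scoped Matrix ComplexOrder

set_option maxHeartbeats 4000000 in
/-- **Unfused Zamolodchikov–Faddeev relation**: if `𝐝𝐞 − q𝐞𝐝 = (1−q)·1` in a ℂ-algebra `A`,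
then for all nonzero `x, y` with `q(x/y) ≠ 1` and all `c, d ∈ {0,1}`,
`M_c(y) M_d(x) = Σ_{a,b} R(x/y)_{b,a}^{d,c} M_b(x) M_a(y)`. -/
theorem unfused_ZF {A : Type*} [Ring A] [Algebra ℂ A] (q : ℂ) (dd ee : A)
    (hde : dd * ee - q • (ee * dd) = (1 - q) • (1 : A))
    (x y : ℂ) (hx : x ≠ 0) (hy : y ≠ 0) (hxy : q * (x / y) ≠ 1) (c d : Fin 2) :
    Mop dd ee c y * Mop dd ee d x =
      ∑ a : Fin 2, ∑ b : Fin 2,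
        Rent q (x / y) b a d c • (Mop dd ee b x * Mop dd ee a y) := by
  have h1 : (1 : ℂ) - q * (x / y) ≠ 0 := sub_ne_zero.mpr (Ne.symm hxy)
  have hc0 : x * y * (1 - q * (x / y)) ≠ 0 := mul_ne_zero (mul_ne_zero hx hy) h1
  have hcan : ∀ t : ℂ, x * y * (1 - q * (x / y)) * (t / (1 - q * (x / y))) = x * y * t :=
    fun t => by rw [mul_assoc, mul_comm (1 - q * (x / y)) (t / (1 - q * (x / y))), div_mul_cancel₀ _ h1]
  have hd : y - x * q ≠ 0 := by
    intro h
    apply h1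
    rw [show (1 : ℂ) - q * (x / y) = (y - x * q) / y by field_simp, h, zero_div]
  have hz1 : -(x * y * q) + y ^ 2 ≠ 0 := fun h =>
    mul_ne_zero hy hd (by linear_combination h)
  have hz2 : -(x * y ^ 2 * q) + y ^ 3 ≠ 0 := fun h =>
    mul_ne_zero (mul_ne_zero hy hy) hd (by linear_combination h)
  have hz3 : x * y ^ 2 - x ^ 2 * y * q ≠ 0 := fun h =>
    mul_ne_zero (mul_ne_zero hx hy) hd (by linear_combination h)
  have hz4 : x * y ^ 3 - x ^ 2 * y ^ 2 * q ≠ 0 := fun h =>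
    mul_ne_zero (mul_ne_zero hx (mul_ne_zero hy hy)) hd (by linear_combination h)
  have hz5 : x ^ 2 * y ^ 2 - x ^ 3 * y * q ≠ 0 := fun h =>
    mul_ne_zero (mul_ne_zero (mul_ne_zero hx hx) hy) hd (by linear_combination h)
  have hde' : dd * ee = q • (ee * dd) + (1 - q) • (1 : A) := by
    rw [sub_eq_iff_eq_add] at hde; rw [hde]; abel
  have hinj : ∀ z w : A,
      (x * y * (1 - q * (x / y))) • z = (x * y * (1 - q * (x / y))) • w → z = w := by
    intro z w h
    rw [← inv_smul_smul₀ hc0 z, h, inv_smul_smul₀ hc0]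
  fin_cases c <;> fin_cases d <;>
  · apply hinj
    simp only [Fin.sum_univ_two]
    simp [Rent, Mop, Algebra.algebraMap_eq_smul_one]
    simp only [mul_add, add_mul, smul_mul_assoc, mul_smul_comm, mul_one, one_mul, smul_smul,
      smul_add, hcan]
    try rw [hde']
    match_scalars
    all_goals try ring
    all_goals field_simp [hd, hz1, hz2, hz3, hz4, hz5]
    all_goals try ring
    all_goals try tauto
end

section
/- (Unfused first Ghoshal–Zamolodchikov relation.) Let q, 𝔞, 𝔠 ∈ ℂ. For all u ∈ ℂ \ {0} with 𝔠u² + u − 𝔞 ≠ 0, all d ∈ {0,1}, and all h ∈ H: W(M_d(u)·h) = Σ_{a ∈ {0,1}} K(u)_a^d · W(M_a(u⁻¹)·h). -/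
open scoped Matrix ComplexOrder

/-- **Unfused first Ghoshal–Zamolodchikov relation**: if `𝐝𝐞 − q𝐞𝐝 = (1−q)·1` and the
ℂ-linear functional `W` on a left `A`-module `H` (with ℂ-bilinear action) kills
`(𝔞𝐞 − 𝔠𝐝 + 1)·h` for all `h`, then for all `u ≠ 0` with `𝔠u² + u − 𝔞 ≠ 0`,
`W(M_d(u)·h) = Σ_a K(u)_a^d W(M_a(u⁻¹)·h)`. -/
theorem unfused_GZ_first {A : Type*} [Ring A] [Algebra ℂ A]
    {H : Type*} [AddCommGroup H] [Module ℂ H] [Module A H]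
    [IsScalarTower ℂ A H] [SMulCommClass ℂ A H]
    (q fa fc : ℂ) (dd ee : A)
    (hde : dd * ee - q • (ee * dd) = (1 - q) • (1 : A))
    (W : H →ₗ[ℂ] ℂ)
    (hW : ∀ h : H, W ((fa • ee - fc • dd + 1) • h) = 0)
    (u : ℂ) (hu : u ≠ 0) (hden : fc * u ^ 2 + u - fa ≠ 0) (d : Fin 2) (h : H) :
    W (Mop dd ee d u • h) =
      ∑ a : Fin 2, Kent fa fc u a d * W (Mop dd ee a u⁻¹ • h) := by
  have key : ∀ (c : ℂ) (x : A), W ((algebraMap ℂ A c + x) • h) = c * W h + W (x • h) := by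
    intro c x
    rw [add_smul, map_add, algebraMap_smul, map_smul, smul_eq_mul]
  have hrel' : fa * W (ee • h) - fc * W (dd • h) + W h = 0 := by
    have h0 := hW h
    simp only [add_smul, sub_smul, smul_assoc, one_smul, map_add, map_sub, map_smul,
      smul_eq_mul] at h0
    exact h0
  fin_cases d
  · simp only [Mop, Kent, Fin.sum_univ_two, inv_inv]
    norm_num [key]
    have hu' : u * u⁻¹ = 1 := mul_inv_cancel₀ hu
    rw [div_mul_eq_mul_div, div_mul_eq_mul_div, ← add_div, eq_div_iff hden]
    linear_combination (u ^ 2 - 1) * hrel' - ((fc - fa) * u + 1) * W h * hu'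
  · simp only [Mop, Kent, Fin.sum_univ_two, inv_inv]
    norm_num [key]
    have hu' : u * u⁻¹ = 1 := mul_inv_cancel₀ hu
    rw [div_mul_eq_mul_div, div_mul_eq_mul_div, ← add_div, eq_div_iff hden]
    linear_combination (1 - u ^ 2) * hrel' + (fc * u + 1 - fa * u) * W h * hu'
end

section
/- (Unfused second Ghoshal–Zamolodchikov relation.) Let q, 𝔟, 𝔡 ∈ ℂ. For all u ∈ ℂ \ {0} with 𝔟u² − u − 𝔡 ≠ 0 and all c ∈ {0,1}, the following identity holds in H: M_c(u)·V = Σ_{b ∈ {0,1}} K̄(u)_b^c · M_b(u⁻¹)·V. -/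
open scoped Matrix ComplexOrder

private lemma GZ_aux0 (fb fd u : ℂ) (hu : u ≠ 0) (hden : fb * u ^ 2 - u - fd ≠ 0)
    {M : Type*} [AddCommGroup M] [Module ℂ M] (x y v : M) :
    u • v + y - (Kbent fb fd u 0 0 • (u⁻¹ • v + y) + Kbent fb fd u 1 0 • (u • v + x)) =
      (-((u ^ 2 - 1) / (fb * u ^ 2 - u - fd))) • (fb • x - fd • y + v) := by
  simp only [Kbent]
  norm_num
  match_scalars <;> (set D := fb * u ^ 2 - u - fd with hD; field_simp <;> (rw [hD]; ring))

private lemma GZ_aux1 (fb fd u : ℂ) (hu : u ≠ 0) (hden : fb * u ^ 2 - u - fd ≠ 0)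
    {M : Type*} [AddCommGroup M] [Module ℂ M] (x y v : M) :
    u⁻¹ • v + x - (Kbent fb fd u 0 1 • (u⁻¹ • v + y) + Kbent fb fd u 1 1 • (u • v + x)) =
      ((u ^ 2 - 1) / (fb * u ^ 2 - u - fd)) • (fb • x - fd • y + v) := by
  simp only [Kbent]
  norm_num
  match_scalars <;> (set D := fb * u ^ 2 - u - fd with hD; field_simp <;> (rw [hD]; ring))

/-- **Unfused second Ghoshal–Zamolodchikov relation**: if `𝐝𝐞 − q𝐞𝐝 = (1−q)·1` and
`(𝔟𝐝 − 𝔡𝐞 + 1)·V = 0` in a left `A`-module `H` (with ℂ-bilinear action), then for all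
`u ≠ 0` with `𝔟u² − u − 𝔡 ≠ 0`, `M_c(u)·V = Σ_b K̄(u)_b^c M_b(u⁻¹)·V`. -/
theorem unfused_GZ_second {A : Type*} [Ring A] [Algebra ℂ A]
    {H : Type*} [AddCommGroup H] [Module ℂ H] [Module A H]
    [IsScalarTower ℂ A H] [SMulCommClass ℂ A H]
    (q fb fd : ℂ) (dd ee : A)
    (hde : dd * ee - q • (ee * dd) = (1 - q) • (1 : A))
    (V : H)
    (hV : (fb • dd - fd • ee + 1) • V = (0 : H))
    (u : ℂ) (hu : u ≠ 0) (hden : fb * u ^ 2 - u - fd ≠ 0) (c : Fin 2) :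
    Mop dd ee c u • V =
      ∑ b : Fin 2, Kbent fb fd u b c • (Mop dd ee b u⁻¹ • V) := by
  have hV' : fb • (dd • V) - fd • (ee • V) + V = 0 := by
    have h := hV
    rw [add_smul, sub_smul, one_smul, smul_assoc, smul_assoc] at h
    exact h
  have hM0 : ∀ v : ℂ, Mop dd ee 0 v • V = v • V + ee • V := by
    intro v
    simp [Mop, add_smul, algebraMap_smul]
  have hM1 : ∀ v : ℂ, Mop dd ee 1 v • V = v⁻¹ • V + dd • V := by
    intro v
    simp [Mop, add_smul, algebraMap_smul]
  rw [Fin.sum_univ_two, hM0, hM1, inv_inv]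
  fin_cases c
  · simp only [Fin.zero_eta, Fin.mk_one, hM0, hM1]
    rw [← sub_eq_zero, GZ_aux0 fb fd u hu hden, hV', smul_zero]
  · simp only [Fin.zero_eta, Fin.mk_one, hM0, hM1]
    rw [← sub_eq_zero, GZ_aux1 fb fd u hu hden, hV', smul_zero]
end

section
/- (Braided form of the fused bulk operator.) Let I ≥ 1 be an integer and let q, u ∈ ℂ with u·q^m ≠ 1 for every integer m with −I ≤ m ≤ I. Let P_{I,I} := P_ω ∈ End((ℂ²)^{⊗2I}) for the permutation ω of {1,…,2I} with ω(i) = i + I for 1 ≤ i ≤ I and ω(i) = i − I for I+1 ≤ i ≤ 2I. Then P_{I,I} ∘ R̊^I(u) = ∏_{a = I,…,1} ∏_{b = a,…,a+I−1} Ř(u q^{b+1−2a})_b, where the outer product over a is taken left to right in decreasing order and the inner product over b is taken left to right in increasing order. -/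
open scoped Matrix ComplexOrder

/-- The permutation of `{1,…,2I}` with `ω(i) = i + I` for `i ≤ I` and `ω(i) = i − I` for
`i > I` (0-based version). -/
noncomputable def swapHalvesPerm (I : ℕ) : Equiv.Perm (Fin (2 * I)) :=
  (finCongr (by omega : 2 * I = I + I)).trans
    ((finAddFlip : Fin (I + I) ≃ Fin (I + I)).trans (finCongr (by omega)))

noncomputable section BraidedAux

noncomputable section BraidedAux

open Matrix

variable {n : ℕ}

abbrev Mat2' := Matrix (Fin 2 × Fin 2) (Fin 2 × Fin 2) ℂ

lemma permMat_one : permMat n 1 = 1 := by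
  funext x y
  simp only [permMat, Matrix.one_apply, Equiv.Perm.one_apply]
  exact if_congr Iff.rfl rfl rfl

lemma permMat_mul (σ τ : Equiv.Perm (Fin n)) :
    permMat n σ * permMat n τ = permMat n (σ * τ) := by
  funext x y
  simp only [Matrix.mul_apply, permMat, ite_mul, one_mul, zero_mul]
  rw [Finset.sum_ite_eq (Finset.univ) (fun k => x (σ k))]
  simp [Equiv.Perm.mul_apply]
  exact if_congr Iff.rfl rfl rfl

lemma emb2_mul_permMat (i j : Fin n) (σ : Equiv.Perm (Fin n)) (T : Mat2') :
    emb2 i j T * permMat n σ = permMat n σ * emb2 (σ⁻¹ i) (σ⁻¹ j) T := by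
  funext x y
  have hc : ∀ z : Fin n → Fin 2, ((fun k => z (σ k)) = y) = (z = fun k => y (σ⁻¹ k)) := by
    intro z
    apply propext
    constructor
    · intro h; funext k
      have := congrFun h (σ⁻¹ k); simpa using this
    · intro h; funext k
      rw [h]; simp
  simp only [Matrix.mul_apply, permMat, emb2, hc, mul_boole, boole_mul,
    Finset.sum_ite_eq, Finset.sum_ite_eq', Finset.mem_univ, if_true,
    (show ∀ k, σ (σ⁻¹ k) = k from fun k => Equiv.apply_symm_apply σ k)]
  congr 1
  apply propext
  constructor
  · intro h k hk1 hk2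
    have := h (σ k) (fun hh => hk1 (by rw [← hh]; simp))
      (fun hh => hk2 (by rw [← hh]; simp))
    simpa using this
  · intro h k hk1 hk2
    have := h (σ⁻¹ k) (fun hh => hk1 (by rw [show k = i from by simpa using congrArg σ hh]))
      (fun hh => hk2 (by rw [show k = j from by simpa using congrArg σ hh]))
    simpa using this
lemma sum_two_sites (i j : Fin n) (hij : i ≠ j) (x : Fin n → Fin 2)
    (G : Fin 2 × Fin 2 → ℂ) :
    (∑ z : Fin n → Fin 2, G (z i, z j) *
      (if ∀ k, k ≠ i → k ≠ j → x k = z k then 1 else 0)) = ∑ p : Fin 2 × Fin 2, G p := by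
  rw [Finset.sum_congr rfl (fun z _ => mul_boole (∀ k, k ≠ i → k ≠ j → x k = z k) (G (z i, z j))),
    ← Finset.sum_filter]
  apply Finset.sum_nbij' (fun z => (z i, z j))
    (fun p => Function.update (Function.update x i p.1) j p.2)
  · intro z _; exact Finset.mem_univ _
  · intro p _
    simp only [Finset.mem_filter, Finset.mem_univ, true_and]
    intro k hk1 hk2
    rw [Function.update_of_ne hk2, Function.update_of_ne hk1]
  · intro z hz
    simp only [Finset.mem_filter, Finset.mem_univ, true_and] at hz
    funext k
    by_cases hk2 : k = j
    · subst hk2; rw [Function.update_self]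
    · rw [Function.update_of_ne hk2]
      by_cases hk1 : k = i
      · subst hk1; rw [Function.update_self]
      · rw [Function.update_of_ne hk1]; exact hz k hk1 hk2
  · intro p _
    simp only [Function.update_self, Function.update_of_ne hij, Function.update_self]
  · intro z _; rfl

lemma emb2_mul (i j : Fin n) (hij : i ≠ j) (S T : Mat2') :
    emb2 i j (S * T) = emb2 i j S * emb2 i j T := by
  funext x y
  simp only [emb2, Matrix.mul_apply]
  have key : ∀ z : Fin n → Fin 2,
      (S (x i, x j) (z i, z j) * (if ∀ k, k ≠ i → k ≠ j → x k = z k then 1 else 0)) *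
      (T (z i, z j) (y i, y j) * (if ∀ k, k ≠ i → k ≠ j → z k = y k then 1 else 0)) =
      (S (x i, x j) (z i, z j) * T (z i, z j) (y i, y j) *
        (if ∀ k, k ≠ i → k ≠ j → x k = y k then 1 else 0)) *
      (if ∀ k, k ≠ i → k ≠ j → x k = z k then 1 else 0) := by
    intro z
    by_cases h1 : ∀ k, k ≠ i → k ≠ j → x k = z k
    · rw [if_pos h1, mul_one, mul_one]
      have : (∀ k, k ≠ i → k ≠ j → z k = y k) ↔ (∀ k, k ≠ i → k ≠ j → x k = y k) := by
        constructor
        · intro h2 k hk1 hk2; rw [h1 k hk1 hk2]; exact h2 k hk1 hk2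
        · intro h2 k hk1 hk2; rw [← h1 k hk1 hk2]; exact h2 k hk1 hk2
      rw [if_congr this rfl rfl]; ring
    · simp [h1]
  rw [Finset.sum_congr rfl (fun z _ => key z)]
  rw [sum_two_sites i j hij x
    (fun p => S (x i, x j) p * T p (y i, y j) * (if ∀ k, k ≠ i → k ≠ j → x k = y k then 1 else 0))]
  rw [← Finset.sum_mul]

lemma emb2_swapMat (i j : Fin n) (hij : i ≠ j) :
    emb2 i j swapMat = permMat n (Equiv.swap i j) := by
  funext x y
  simp only [emb2, swapMat, permMat, boole_mul]
  rw [← ite_and]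
  apply if_congr _ rfl rfl
  constructor
  · rintro ⟨⟨h1, h2⟩, h3⟩
    funext k
    rcases eq_or_ne k i with rfl | hki
    · rw [Equiv.swap_apply_left]; exact h2
    rcases eq_or_ne k j with rfl | hkj
    · rw [Equiv.swap_apply_right]; exact h1
    · rw [Equiv.swap_apply_of_ne_of_ne hki hkj]; exact h3 k hki hkj
  · intro h
    refine ⟨⟨?_, ?_⟩, ?_⟩
    · have := congrFun h j; rwa [Equiv.swap_apply_right] at this
    · have := congrFun h i; rwa [Equiv.swap_apply_left] at this
    · intro k hk1 hk2
      have := congrFun h k; rwa [Equiv.swap_apply_of_ne_of_ne hk1 hk2] at this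
def swapN (n i j : ℕ) : Equiv.Perm (Fin n) :=
  if h : i < n ∧ j < n then Equiv.swap ⟨i, h.1⟩ ⟨j, h.2⟩ else 1

def emb2N (n : ℕ) (i j : ℕ) (T : Mat2') : Matrix (Fin n → Fin 2) (Fin n → Fin 2) ℂ :=
  if h : i < n ∧ j < n then emb2 ⟨i, h.1⟩ ⟨j, h.2⟩ T else 1

def ap (σ : Equiv.Perm (Fin n)) (i : ℕ) : ℕ :=
  if h : i < n then (σ ⟨i, h⟩ : Fin n).1 else i

lemma ap_lt (σ : Equiv.Perm (Fin n)) {i : ℕ} (h : i < n) : ap σ i < n := by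
  rw [ap, dif_pos h]; exact (σ ⟨i, h⟩).isLt

lemma ap_mul (σ τ : Equiv.Perm (Fin n)) (i : ℕ) : ap (σ * τ) i = ap σ (ap τ i) := by
  simp only [ap, Equiv.Perm.mul_apply]
  by_cases h : i < n
  · simp [h]
  · simp [h]

lemma ap_one (i : ℕ) : ap (1 : Equiv.Perm (Fin n)) i = i := by
  by_cases h : i < n
  · rw [ap, dif_pos h]; rfl
  · rw [ap, dif_neg h]

lemma ap_swapN {i j : ℕ} (hi : i < n) (hj : j < n) (k : ℕ) :
    ap (swapN n i j) k = if k = i then j else if k = j then i else k := by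
  rw [swapN, dif_pos ⟨hi, hj⟩]
  by_cases h : k < n
  · rw [ap, dif_pos h]
    rcases eq_or_ne k i with rfl | hki
    · rw [if_pos rfl]
      have hmk : (⟨k, h⟩ : Fin n) = ⟨k, hi⟩ := rfl
      rw [hmk, Equiv.swap_apply_left]
    rcases eq_or_ne k j with rfl | hkj
    · rw [if_neg hki, if_pos rfl]
      have hmk : (⟨k, h⟩ : Fin n) = ⟨k, hj⟩ := rfl
      rw [hmk, Equiv.swap_apply_right]
    · rw [if_neg hki, if_neg hkj, Equiv.swap_apply_of_ne_of_ne
        (fun hh => hki (by simpa using congrArg Fin.val hh))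
        (fun hh => hkj (by simpa using congrArg Fin.val hh))]
  · rw [ap, dif_neg h, if_neg (by omega), if_neg (by omega)]

lemma ap_inv_eq (σ : Equiv.Perm (Fin n)) {x y : ℕ} (hy : y < n) (h : ap σ y = x) :
    ap σ⁻¹ x = y := by
  subst h
  have h1 : ap σ y = (σ ⟨y, hy⟩ : Fin n).1 := by rw [ap, dif_pos hy]
  rw [h1, ap, dif_pos (σ ⟨y, hy⟩).isLt]
  simp

def cycN (n : ℕ) : ℕ → ℕ → Equiv.Perm (Fin n)
  | _, 0 => 1
  | c, (m + 1) => swapN n c (c + 1) * cycN n (c + 1) m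

lemma cycN_ap (c m : ℕ) (h : c + m < n) (k : ℕ) :
    ap (cycN n c m) k =
      if k < c then k else if k < c + m then k + 1 else if k = c + m then c else k := by
  induction m generalizing c k with
  | zero => rw [cycN, ap_one]; split_ifs <;> omega
  | succ m ih =>
    rw [cycN, ap_mul, ih (c + 1) (by omega), ap_swapN (by omega) (by omega)]
    split_ifs <;> omega

def ThN (n I : ℕ) : ℕ → Equiv.Perm (Fin n)
  | 0 => 1
  | (d + 1) => cycN n d I * ThN n I d

lemma ThN_ap_lt {I : ℕ} (hn : n = 2 * I) (d : ℕ) :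
    d ≤ I → ∀ b, b < I → ap (ThN n I d) b = b + d := by
  induction d with
  | zero => intro _ b _; rw [ThN, ap_one, Nat.add_zero]
  | succ d ih =>
    intro hd b hb
    rw [ThN, ap_mul, ih (by omega) b hb, cycN_ap d I (by omega)]
    split_ifs <;> omega

lemma ThN_ap_ge {I : ℕ} (hn : n = 2 * I) (d : ℕ) :
    d ≤ I → ∀ k, I + d ≤ k → ap (ThN n I d) k = k := by
  induction d with
  | zero => intro _ k _; rw [ThN, ap_one]
  | succ d ih =>
    intro hd k hk
    rw [ThN, ap_mul, ih (by omega) k (by omega), cycN_ap d I (by omega)]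
    split_ifs <;> omega

lemma ThN_ap_mid {I : ℕ} (hn : n = 2 * I) (d : ℕ) :
    d ≤ I → ∀ j, j < d → ap (ThN n I d) (I + j) = j := by
  induction d with
  | zero => intro _ j hj; omega
  | succ d ih =>
    intro hd j hj
    rcases eq_or_ne j d with rfl | hjd
    · rw [ThN, ap_mul, ThN_ap_ge hn j (by omega) (I + j) (by omega), cycN_ap j I (by omega)]
      split_ifs <;> omega
    · rw [ThN, ap_mul, ih (by omega) j (by omega), cycN_ap d I (by omega)]
      split_ifs <;> omega
lemma ap_pos (σ : Equiv.Perm (Fin n)) {i : ℕ} (h : i < n) :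
    ap σ i = ((σ ⟨i, h⟩ : Fin n) : ℕ) := dif_pos h

lemma ap_neg (σ : Equiv.Perm (Fin n)) {i : ℕ} (h : ¬ i < n) : ap σ i = i := dif_neg h

lemma emb2N_mul_permMat' (i j : ℕ) (σ : Equiv.Perm (Fin n)) (T : Mat2') :
    emb2N n i j T * permMat n σ = permMat n σ * emb2N n (ap σ⁻¹ i) (ap σ⁻¹ j) T := by
  by_cases h : i < n ∧ j < n
  · rw [emb2N, dif_pos h, emb2N, dif_pos ⟨ap_lt _ h.1, ap_lt _ h.2⟩, emb2_mul_permMat]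
    have e1 : (σ⁻¹ ⟨i, h.1⟩ : Fin n) = ⟨ap σ⁻¹ i, ap_lt _ h.1⟩ :=
      Fin.ext (ap_pos σ⁻¹ h.1).symm
    have e2 : (σ⁻¹ ⟨j, h.2⟩ : Fin n) = ⟨ap σ⁻¹ j, ap_lt _ h.2⟩ :=
      Fin.ext (ap_pos σ⁻¹ h.2).symm
    rw [e1, e2]
  · have h' : ¬(ap σ⁻¹ i < n ∧ ap σ⁻¹ j < n) := by
      rcases not_and_or.mp h with hi | hj
      · exact fun hc => hi ((ap_neg σ⁻¹ hi) ▸ hc.1)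
      · exact fun hc => hj ((ap_neg σ⁻¹ hj) ▸ hc.2)
    rw [emb2N, dif_neg h, emb2N, dif_neg h', one_mul, mul_one]

lemma prod_emb2N_mul_permMat (σ : Equiv.Perm (Fin n)) (m : ℕ) (f g : ℕ → ℕ) (T : ℕ → Mat2') :
    ((List.range m).map (fun b => emb2N n (f b) (g b) (T b))).prod * permMat n σ
    = permMat n σ *
      ((List.range m).map (fun b => emb2N n (ap σ⁻¹ (f b)) (ap σ⁻¹ (g b)) (T b))).prod := by
  induction m with
  | zero => simp
  | succ m ih =>
    rw [List.range_succ, List.map_append, List.map_append, List.prod_append, List.prod_append]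
    simp only [List.map_cons, List.map_nil, List.prod_cons, List.prod_nil, mul_one]
    rw [mul_assoc, emb2N_mul_permMat', ← mul_assoc, ih, mul_assoc]

lemma emb2N_Rcheck (s : ℕ) (h : s + 1 < n) (q v : ℂ) :
    emb2N n s (s + 1) (RcheckMat q v) =
      permMat n (swapN n s (s + 1)) * emb2N n s (s + 1) (Rmat q v) := by
  have hne : (⟨s, by omega⟩ : Fin n) ≠ ⟨s + 1, h⟩ := by
    intro hc; exact absurd (congrArg Fin.val hc) (by simp)
  rw [emb2N, dif_pos ⟨by omega, h⟩, emb2N, dif_pos ⟨by omega, h⟩, RcheckMat,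
    emb2_mul _ _ hne, emb2_swapMat _ _ hne, swapN, dif_pos ⟨by omega, h⟩]

lemma emb2_eq_emb2N {i j i' j' : ℕ} (hi : i < n) (hj : j < n) (h1 : i = i') (h2 : j = j')
    (T : Mat2') : emb2 (⟨i, hi⟩ : Fin n) ⟨j, hj⟩ T = emb2N n i' j' T := by
  subst h1; subst h2; rw [emb2N, dif_pos ⟨hi, hj⟩]

lemma finRange_map_eq {α : Type*} (m : ℕ) (f : Fin m → α) (g : ℕ → α)
    (h : ∀ k : Fin m, f k = g k.1) :
    (List.finRange m).map f = (List.range m).map g := by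
  apply List.ext_getElem (by simp)
  intro i h1 h2
  simp only [List.getElem_map, List.getElem_finRange, List.getElem_range, h]
  rfl

lemma ThN_eq_swapHalves (I : ℕ) : ThN (2 * I) I I = swapHalvesPerm I := by
  apply Equiv.ext
  intro k
  apply Fin.val_injective
  have h1 : ((ThN (2 * I) I I) k).1 = ap (ThN (2 * I) I I) k.1 := by
    rw [ap, dif_pos k.isLt, Fin.eta]
  rw [h1]
  have h2 : (swapHalvesPerm I k).1 = if k.1 < I then k.1 + I else k.1 - I := by
    have hk := k.isLt
    simp only [swapHalvesPerm, Equiv.trans_apply, finCongr_apply]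
    by_cases hkI : k.1 < I
    · rw [if_pos hkI]
      have : (Fin.cast (by omega : 2 * I = I + I) k) = ⟨k.1, by omega⟩ := rfl
      rw [this, finAddFlip_apply_mk_left hkI]
      simp [Nat.add_comm]
    · rw [if_neg hkI]
      have : (Fin.cast (by omega : 2 * I = I + I) k) = ⟨k.1, by omega⟩ := rfl
      rw [this, finAddFlip_apply_mk_right (by omega) (by omega)]
      simp
  rw [h2]
  by_cases hkI : k.1 < I
  · rw [if_pos hkI, ThN_ap_lt rfl I le_rfl k.1 hkI]
  · rw [if_neg hkI]
    have hk := k.isLt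
    have : k.1 = I + (k.1 - I) := by omega
    rw [this, ThN_ap_mid rfl I le_rfl (k.1 - I) (by omega)]
    omega
lemma rowLemma (m : ℕ) : ∀ (c : ℕ), c + m < n → ∀ (T : ℕ → Mat2'),
    ((List.range m).map (fun b =>
      permMat n (swapN n (c + b) (c + b + 1)) * emb2N n (c + b) (c + b + 1) (T b))).prod
    = permMat n (cycN n c m) *
      ((List.range m).map (fun b => emb2N n (c + b) (c + m) (T b))).prod := by
  induction m with
  | zero => intro c _ T; simp [cycN, permMat_one]
  | succ m ih =>
    intro c hc T
    rw [List.range_succ_eq_map, List.map_cons, List.map_cons, List.prod_cons, List.prod_cons,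
      List.map_map, List.map_map]
    have htail : (List.range m).map ((fun b =>
        permMat n (swapN n (c + b) (c + b + 1)) * emb2N n (c + b) (c + b + 1) (T b)) ∘ Nat.succ)
        = (List.range m).map (fun b =>
        permMat n (swapN n ((c+1) + b) ((c+1) + b + 1)) *
          emb2N n ((c+1) + b) ((c+1) + b + 1) (T (b + 1))) := by
      apply List.map_congr_left
      intro b _
      simp only [Function.comp_apply]
      rw [show c + Nat.succ b = c + 1 + b by omega]
    rw [htail, ih (c + 1) (by omega) (fun b => T (b + 1))]
    have htail2 : (List.range m).map ((fun b => emb2N n (c + b) (c + (m+1)) (T b)) ∘ Nat.succ)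
        = (List.range m).map (fun b => emb2N n ((c+1) + b) ((c+1) + m) (T (b + 1))) := by
      apply List.map_congr_left
      intro b _
      simp only [Function.comp_apply]
      rw [show c + Nat.succ b = c + 1 + b by omega, show c + (m+1) = c + 1 + m by omega]
    rw [htail2]
    have hap1 : ap (cycN n (c+1) m)⁻¹ c = c :=
      ap_inv_eq _ (by omega) (by rw [cycN_ap (c+1) m (by omega)]; split_ifs <;> omega)
    have hap2 : ap (cycN n (c+1) m)⁻¹ (c + 1) = c + 1 + m :=
      ap_inv_eq _ (by omega) (by rw [cycN_ap (c+1) m (by omega)]; split_ifs <;> omega)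
    calc permMat n (swapN n (c + 0) (c + 0 + 1)) * emb2N n (c + 0) (c + 0 + 1) (T 0) *
          (permMat n (cycN n (c+1) m) *
            ((List.range m).map (fun b => emb2N n ((c+1) + b) ((c+1) + m) (T (b + 1)))).prod)
        = permMat n (swapN n c (c + 1)) *
          (emb2N n c (c + 1) (T 0) * permMat n (cycN n (c+1) m)) *
          ((List.range m).map (fun b => emb2N n ((c+1) + b) ((c+1) + m) (T (b + 1)))).prod := by
          rw [show c + 0 = c from rfl]; noncomm_ring
      _ = permMat n (swapN n c (c + 1)) *
          (permMat n (cycN n (c+1) m) * emb2N n c (c + 1 + m) (T 0)) *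
          ((List.range m).map (fun b => emb2N n ((c+1) + b) ((c+1) + m) (T (b + 1)))).prod := by
          rw [emb2N_mul_permMat', hap1, hap2]
      _ = permMat n (cycN n c (m + 1)) *
          (emb2N n c (c + 1 + m) (T 0) *
          ((List.range m).map (fun b => emb2N n ((c+1) + b) ((c+1) + m) (T (b + 1)))).prod) := by
          rw [show cycN n c (m + 1) = swapN n c (c + 1) * cycN n (c+1) m from rfl,
            ← permMat_mul]
          noncomm_ring
      _ = permMat n (cycN n c (m + 1)) *
          (emb2N n (c + 0) (c + (m + 1)) (T 0) *
          ((List.range m).map (fun b => emb2N n ((c+1) + b) ((c+1) + m) (T (b + 1)))).prod) := by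
          rw [show c + 0 = c from rfl, show c + (m + 1) = c + 1 + m by omega]

lemma colLemma (I : ℕ) (hn : n = 2 * I) (d : ℕ) : d ≤ I → ∀ (T : ℕ → ℕ → Mat2'),
    ((List.range d).map (fun j => permMat n (cycN n (d - 1 - j) I) *
      ((List.range I).map (fun b =>
        emb2N n ((d - 1 - j) + b) ((d - 1 - j) + I) (T j b))).prod)).prod
    = permMat n (ThN n I d) *
      ((List.range d).map (fun j =>
        ((List.range I).map (fun b => emb2N n b ((d - 1 - j) + I) (T j b))).prod)).prod := by
  induction d with
  | zero => intro _ T; simp [ThN, permMat_one]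
  | succ d ih =>
    intro hd T
    rw [List.range_succ_eq_map, List.map_cons, List.map_cons, List.prod_cons, List.prod_cons,
      List.map_map, List.map_map]
    have htail : (List.range d).map ((fun j => permMat n (cycN n (d + 1 - 1 - j) I) *
        ((List.range I).map (fun b =>
          emb2N n ((d + 1 - 1 - j) + b) ((d + 1 - 1 - j) + I) (T j b))).prod) ∘ Nat.succ)
        = (List.range d).map (fun j => permMat n (cycN n (d - 1 - j) I) *
        ((List.range I).map (fun b =>
          emb2N n ((d - 1 - j) + b) ((d - 1 - j) + I) (T (j + 1) b))).prod) := by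
      apply List.map_congr_left
      intro j hj
      simp only [Function.comp_apply]
      rw [show d + 1 - 1 - Nat.succ j = d - 1 - j by omega]
    rw [htail, ih (by omega) (fun j b => T (j + 1) b)]
    have htail2 : (List.range d).map ((fun j =>
        ((List.range I).map (fun b => emb2N n b ((d + 1 - 1 - j) + I) (T j b))).prod) ∘ Nat.succ)
        = (List.range d).map (fun j =>
        ((List.range I).map (fun b => emb2N n b ((d - 1 - j) + I) (T (j + 1) b))).prod) := by
      apply List.map_congr_left
      intro j hj
      simp only [Function.comp_apply]
      rw [show d + 1 - 1 - Nat.succ j = d - 1 - j by omega]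
    rw [htail2]
    have hd11 : d + 1 - 1 - 0 = d := by omega
    rw [hd11]
    have hcomm : ((List.range I).map (fun b => emb2N n (d + b) (d + I) (T 0 b))).prod *
        permMat n (ThN n I d)
        = permMat n (ThN n I d) *
          ((List.range I).map (fun b => emb2N n b (d + I) (T 0 b))).prod := by
      rw [prod_emb2N_mul_permMat (ThN n I d) I (fun b => d + b) (fun _ => d + I) (T 0)]
      congr 1
      refine congrArg List.prod (List.map_congr_left ?_)
      intro b hb
      have hbI : b < I := List.mem_range.mp hb
      have h1 : ap (ThN n I d)⁻¹ (d + b) = b :=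
        ap_inv_eq _ (by omega) (by rw [ThN_ap_lt hn d (by omega) b hbI]; omega)
      have h2 : ap (ThN n I d)⁻¹ (d + I) = d + I :=
        ap_inv_eq _ (by omega) (ThN_ap_ge hn d (by omega) (d + I) (by omega))
      rw [h1, h2]
    calc permMat n (cycN n d I) *
          ((List.range I).map (fun b => emb2N n (d + b) (d + I) (T 0 b))).prod *
          (permMat n (ThN n I d) *
            ((List.range d).map (fun j =>
              ((List.range I).map (fun b => emb2N n b ((d - 1 - j) + I) (T (j + 1) b))).prod)).prod)
        = permMat n (cycN n d I) *
          (((List.range I).map (fun b => emb2N n (d + b) (d + I) (T 0 b))).prod *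
            permMat n (ThN n I d)) *
          ((List.range d).map (fun j =>
            ((List.range I).map (fun b => emb2N n b ((d - 1 - j) + I) (T (j + 1) b))).prod)).prod := by
          noncomm_ring
      _ = permMat n (ThN n I (d + 1)) *
          (((List.range I).map (fun b => emb2N n b (d + I) (T 0 b))).prod *
          ((List.range d).map (fun j =>
            ((List.range I).map (fun b => emb2N n b ((d - 1 - j) + I) (T (j + 1) b))).prod)).prod) := by
          rw [hcomm, show ThN n I (d + 1) = cycN n d I * ThN n I d from rfl, ← permMat_mul]
          noncomm_ring

end BraidedAux

/-- **Braided form of the fused bulk operator**: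
`P_{I,I} ∘ R̊^I(u) = ∏_{a=I,…,1} ∏_{b=a,…,a+I−1} Ř(u q^{b+1−2a})_b`, the outer product over
`a` in decreasing order, the inner product over `b` in increasing order (here `a = I − a'`,
`b = a + b'`, and `Ř(v)_b` acts on the `b`-th and `(b+1)`-th tensor factors, 1-based). -/
theorem braided_fused_R (I : ℕ) (hI : 1 ≤ I) (q u : ℂ)
    (hreg : ∀ m : ℤ, -(I : ℤ) ≤ m → m ≤ (I : ℤ) → u * q ^ m ≠ 1) :
    permMat (2 * I) (swapHalvesPerm I) * Rring I q u =
      ((List.finRange I).map (fun a' =>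
        ((List.finRange I).map (fun b' =>
          emb2 (⟨I - a'.1 - 1 + b'.1, by have := a'.isLt; have := b'.isLt; omega⟩ : Fin (2 * I))
            ⟨I - a'.1 + b'.1, by have := a'.isLt; have := b'.isLt; omega⟩
            (RcheckMat q (u * q ^ (((b'.1 : ℤ) + 1) - ((I : ℤ) - (a'.1 : ℤ))))))).prod)).prod := by
  clear hreg
  -- convert the right-hand side to `emb2N`/range form
  have h1 : ((List.finRange I).map (fun a' =>
        ((List.finRange I).map (fun b' =>
          emb2 (⟨I - a'.1 - 1 + b'.1, by have := a'.isLt; have := b'.isLt; omega⟩ : Fin (2 * I))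
            ⟨I - a'.1 + b'.1, by have := a'.isLt; have := b'.isLt; omega⟩
            (RcheckMat q (u * q ^ (((b'.1 : ℤ) + 1) - ((I : ℤ) - (a'.1 : ℤ))))))).prod)).prod
      = ((List.range I).map (fun a =>
        ((List.range I).map (fun b =>
          emb2N (2 * I) (I - 1 - a + b) (I - 1 - a + b + 1)
            (RcheckMat q (u * q ^ (((b : ℤ) + 1) - ((I : ℤ) - (a : ℤ))))))).prod)).prod := by
    refine congrArg List.prod (finRange_map_eq _ _ _ ?_)
    intro a'
    refine congrArg List.prod (finRange_map_eq _ _ _ ?_)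
    intro b'
    exact emb2_eq_emb2N _ _ (by have := a'.isLt; have := b'.isLt; omega)
      (by have := a'.isLt; have := b'.isLt; omega) _
  rw [h1]
  -- convert the left-hand side product to `emb2N`/range form
  have hL : Rring I q u = ((List.range I).map (fun j =>
      ((List.range I).map (fun b => emb2N (2 * I) b (I - 1 - j + I)
        (Rmat q (u * q ^ (((b : ℤ) + 1) - ((I : ℤ) - (j : ℤ))))))).prod)).prod := by
    rw [Rring]
    refine congrArg List.prod (finRange_map_eq _ _ _ ?_)
    intro a'
    refine congrArg List.prod (finRange_map_eq _ _ _ ?_)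
    intro b'
    exact emb2_eq_emb2N _ _ rfl (by have := a'.isLt; omega) _
  rw [hL]
  -- rewrite each `Ř` factor as a swap times an `R` factor and apply the row lemma
  have h2 : ∀ a ∈ List.range I,
      ((List.range I).map (fun b =>
        emb2N (2 * I) (I - 1 - a + b) (I - 1 - a + b + 1)
          (RcheckMat q (u * q ^ (((b : ℤ) + 1) - ((I : ℤ) - (a : ℤ))))))).prod
      = permMat (2 * I) (cycN (2 * I) (I - 1 - a) I) *
        ((List.range I).map (fun b => emb2N (2 * I) (I - 1 - a + b) (I - 1 - a + I)
          (Rmat q (u * q ^ (((b : ℤ) + 1) - ((I : ℤ) - (a : ℤ))))))).prod := by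
    intro a ha
    have haI : a < I := List.mem_range.mp ha
    have hstep : ∀ b ∈ List.range I,
        emb2N (2 * I) (I - 1 - a + b) (I - 1 - a + b + 1)
          (RcheckMat q (u * q ^ (((b : ℤ) + 1) - ((I : ℤ) - (a : ℤ)))))
        = permMat (2 * I) (swapN (2 * I) (I - 1 - a + b) (I - 1 - a + b + 1)) *
          emb2N (2 * I) (I - 1 - a + b) (I - 1 - a + b + 1)
            (Rmat q (u * q ^ (((b : ℤ) + 1) - ((I : ℤ) - (a : ℤ))))) := by
      intro b hb
      have hbI : b < I := List.mem_range.mp hb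
      exact emb2N_Rcheck _ (by omega) q _
    rw [List.map_congr_left hstep]
    exact rowLemma I (I - 1 - a) (by omega) _
  rw [List.map_congr_left h2]
  have hcol := colLemma (n := 2 * I) I rfl I le_rfl
    (fun j b => Rmat q (u * q ^ (((b : ℤ) + 1) - ((I : ℤ) - (j : ℤ)))))
  rw [show ((List.range I).map (fun j =>
      permMat (2 * I) (cycN (2 * I) (I - 1 - j) I) *
      ((List.range I).map (fun b => emb2N (2 * I) (I - 1 - j + b) (I - 1 - j + I)
        (Rmat q (u * q ^ (((b : ℤ) + 1) - ((I : ℤ) - (j : ℤ))))))).prod)).prod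
    = permMat (2 * I) (ThN (2 * I) I I) *
      ((List.range I).map (fun j =>
        ((List.range I).map (fun b => emb2N (2 * I) b (I - 1 - j + I)
          (Rmat q (u * q ^ (((b : ℤ) + 1) - ((I : ℤ) - (j : ℤ))))))).prod)).prod from hcol]
  rw [ThN_eq_swapHalves]
end BraidedAux
end
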